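/- Define B : ℕ → ℤ by B(-1)=0, B(0)=1, and B(n)=(n+3)B(n-1) - n·B(n-2) for n≥1. Then B(n) = ((n+1)^2 / n) · B(n-1) for all n≥1 (equivalently n·B(n) = (n+1)^2·B(n-1)). -/

import Mathlib

theorem stmt6 (B : ℤ → ℤ)
    (hB1 : B (-1) = 0) (hB0 : B 0 = 1)
    (hBrec : ∀ n : ℤ, 1 ≤ n → B n = (n + 3) * B (n - 1) - n * B (n - 2)) :
    ∀ n : ℤ, 1 ≤ n → n * B n = (n + 1) ^ 2 * B (n - 1) := by
  intro n hn
  refine Int.le_induction (motive := fun k _ => k * B k = (k + 1) ^ 2 * B (k - 1)) ?_ ?_ n hn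
  · have h := hBrec 1 le_rfl
    norm_num at h ⊢
    rw [h, hB0, hB1]; ring
  · intro n hn ih
    have hr := hBrec (n + 1) (by linarith)
    have e1 : n + 1 - 1 = n := by ring
    have e2 : n + 1 - 2 = n - 1 := by ring
    rw [e1, e2] at hr
    have hne : (n + 1 : ℤ) ≠ 0 := by linarith
    rw [e1]
    refine mul_left_cancel₀ hne ?_
    linear_combination (n + 1) ^ 2 * hr + (n + 1) * ih
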